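/- Let 1 ≤ p_B ≤ p_A ≤ p_H ≤ ∞, let a, b ∈ ℝ^d satisfy αᵀa ≤ β and αᵀb > β, let x* be a minimizer of x ↦ ‖x − a‖_{p_A} over 𝓗 and y* a minimizer of y ↦ ‖y − b‖_{p_B} over 𝓗, and suppose the Rapid Enough Transit Media condition holds for a and b: (i) ‖a − x*‖_{p_A} + ‖x − x*‖_{p_H} ≤ ‖x − a‖_{p_A} for all x ∈ 𝓗, and (ii) ‖b − y*‖_{p_B} + ‖y* − y‖_{p_H} ≤ ‖y − b‖_{p_B} for all y ∈ 𝓗. Then for all x, y ∈ 𝓗: ‖x − a‖_{p_A} + ‖x − y‖_{p_H} + ‖y − b‖_{p_B} ≥ ‖x* − a‖_{p_A} + ‖x* − y*‖_{p_H} + ‖y* − b‖_{p_B}; that is, the shortest path from a to b crossing through the hyperplane enters at x* and exits at y*. -/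

import Mathlib

open scoped ENNReal BigOperators

/-- The `ℓ_p` norm on `ℝ^d` for `p : ℝ≥0∞` (intended for `1 ≤ p ≤ ∞`). -/
noncomputable def lpNorm {d : ℕ} (p : ℝ≥0∞) (x : Fin d → ℝ) : ℝ :=
  if p = ∞ then ⨆ k, |x k| else (∑ k, |x k| ^ p.toReal) ^ (1 / p.toReal)

lemma lpNorm_neg {d : ℕ} (p : ℝ≥0∞) (x : Fin d → ℝ) : lpNorm p (-x) = lpNorm p x := by
  unfold lpNorm
  simp [abs_neg]

lemma lpNorm_sub_comm {d : ℕ} (p : ℝ≥0∞) (x y : Fin d → ℝ) :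
    lpNorm p (x - y) = lpNorm p (y - x) := by
  rw [← lpNorm_neg p (y - x), neg_sub]

lemma lpNorm_add_le {d : ℕ} {p : ℝ≥0∞} (hp : 1 ≤ p) (x y : Fin d → ℝ) :
    lpNorm p (x + y) ≤ lpNorm p x + lpNorm p y := by
  unfold lpNorm
  by_cases hinf : p = ∞
  · simp only [hinf, if_pos]
    rcases isEmpty_or_nonempty (Fin d) with h | h
    · simp [Real.iSup_of_isEmpty]
    · apply ciSup_le
      intro k
      calc |(x + y) k| ≤ |x k| + |y k| := by simpa using abs_add_le (x k) (y k)
        _ ≤ (⨆ k, |x k|) + ⨆ k, |y k| :=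
          add_le_add
            (le_ciSup (f := fun k => |x k|) (Set.Finite.bddAbove (Set.finite_range _)) k)
            (le_ciSup (f := fun k => |y k|) (Set.Finite.bddAbove (Set.finite_range _)) k)
  · simp only [hinf, if_neg, if_false]
    have hp1 : (1 : ℝ) ≤ p.toReal := by
      have := ENNReal.toReal_mono hinf hp
      simpa using this
    simpa using Real.Lp_add_le Finset.univ x y hp1

/-- Lemma 12: under the Rapid Enough Transit Media (RETM) condition and
`p_B ≤ p_A ≤ p_H`, the shortest path from `a` to `b` crossing through the
hyperplane enters at the projection `x*` of `a` and exits at the projection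
`y*` of `b`. -/
theorem stmt_12 {d : ℕ} (pA pB pH : ℝ≥0∞)
    (h1 : 1 ≤ pB) (hBA : pB ≤ pA) (hAH : pA ≤ pH)
    (α : Fin d → ℝ) (hα : α ≠ 0) (β : ℝ)
    (a b : Fin d → ℝ) (ha : ∑ i, α i * a i ≤ β) (hb : β < ∑ i, α i * b i)
    (xs ys : Fin d → ℝ) (hxs : ∑ i, α i * xs i = β) (hys : ∑ i, α i * ys i = β)
    (hxmin : ∀ x : Fin d → ℝ, ∑ i, α i * x i = β →
      lpNorm pA (xs - a) ≤ lpNorm pA (x - a))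
    (hymin : ∀ y : Fin d → ℝ, ∑ i, α i * y i = β →
      lpNorm pB (ys - b) ≤ lpNorm pB (y - b))
    (retm1 : ∀ x : Fin d → ℝ, ∑ i, α i * x i = β →
      lpNorm pA (a - xs) + lpNorm pH (x - xs) ≤ lpNorm pA (x - a))
    (retm2 : ∀ y : Fin d → ℝ, ∑ i, α i * y i = β →
      lpNorm pB (b - ys) + lpNorm pH (ys - y) ≤ lpNorm pB (y - b)) :
    ∀ x y : Fin d → ℝ, ∑ i, α i * x i = β → ∑ i, α i * y i = β →
      lpNorm pA (xs - a) + lpNorm pH (xs - ys) + lpNorm pB (ys - b) ≤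
        lpNorm pA (x - a) + lpNorm pH (x - y) + lpNorm pB (y - b) := by
  intro x y hx hy
  have hpH : 1 ≤ pH := le_trans h1 (le_trans hBA hAH)
  have h1' := retm1 x hx
  have h2' := retm2 y hy
  have htri : lpNorm pH (xs - ys) ≤
      lpNorm pH (x - xs) + lpNorm pH (x - y) + lpNorm pH (ys - y) := by
    have e1 : xs - ys = (xs - x) + ((x - y) + (y - ys)) := by abel
    calc lpNorm pH (xs - ys) = lpNorm pH ((xs - x) + ((x - y) + (y - ys))) := by rw [← e1]
      _ ≤ lpNorm pH (xs - x) + lpNorm pH ((x - y) + (y - ys)) := lpNorm_add_le hpH _ _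
      _ ≤ lpNorm pH (xs - x) + (lpNorm pH (x - y) + lpNorm pH (y - ys)) :=
        add_le_add_right (lpNorm_add_le hpH _ _) _
      _ = lpNorm pH (x - xs) + lpNorm pH (x - y) + lpNorm pH (ys - y) := by
        rw [lpNorm_sub_comm pH xs x, lpNorm_sub_comm pH y ys]; ring
  have ea : lpNorm pA (xs - a) = lpNorm pA (a - xs) := lpNorm_sub_comm _ _ _
  have eb : lpNorm pB (ys - b) = lpNorm pB (b - ys) := lpNorm_sub_comm _ _ _
  calc lpNorm pA (xs - a) + lpNorm pH (xs - ys) + lpNorm pB (ys - b)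
      ≤ lpNorm pA (a - xs) + (lpNorm pH (x - xs) + lpNorm pH (x - y) + lpNorm pH (ys - y))
        + lpNorm pB (b - ys) := by rw [ea, eb]; exact add_le_add_left (add_le_add_right htri _) _
    _ = (lpNorm pA (a - xs) + lpNorm pH (x - xs)) + lpNorm pH (x - y)
        + (lpNorm pB (b - ys) + lpNorm pH (ys - y)) := by ring
    _ ≤ lpNorm pA (x - a) + lpNorm pH (x - y) + lpNorm pB (y - b) :=
        add_le_add (add_le_add_left h1' _) h2'
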